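/- Let n = 5 and suppose the parameter collection c satisfies, for the pair (i,j) = (1,2): (C1) c_1^{k2} c_2^{l1} ≠ c_2^{k1} c_1^{l2} for all k ≠ l with k,l ∈ {3,4,5}; and (C2) for every p ∈ {3,4,5}, writing {k,l,m} = {1,…,5} \ {1,2,p}, for each I ∈ {1,2} one has c_p^{kI}(c_1^{l2}c_2^{m1} − c_2^{l1}c_1^{m2}) + c_p^{lI}(c_2^{k1}c_1^{m2} − c_1^{k2}c_2^{m1}) + c_p^{mI}(c_1^{k2}c_2^{l1} − c_2^{k1}c_1^{l2}) ≠ 0. Let a = (0, 0, a_3, a_4, a_5) ∈ ℝ^5 be a unit vector with a_3 a_4 a_5 ≠ 0 satisfying Σ_{k=3}^5 c_1^{k2} a_k = 0 and Σ_{k=3}^5 c_2^{k1} a_k = 0. Then there exist T > 0 and a continuous map ξ : (0,T) → ℝ^5 \ {0} with ξ(t) → a as t → 0⁺, such that rank P(ξ(t), tc) ≤ 3 for all t ∈ (0,T), i.e., ξ(t) ∈ Σ_sing(tc). -/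

import Mathlib

open Matrix

/-- A parameter collection: `c i k j` denotes `c_i^{kj}`, symmetric in the two
superscripts, with normalizations `c_i^{ii} = 1` and `c_i^{jj} = 0` for `i ≠ j`. -/
def IsParamColl (n : ℕ) (c : Fin n → Fin n → Fin n → ℝ) : Prop :=
  (∀ i j k : Fin n, j ≠ k → c i k j = c i j k) ∧
  (∀ i : Fin n, c i i i = 1) ∧
  (∀ i j : Fin n, i ≠ j → c i j j = 0)

/-- The principal symbol `P(ξ, c) = Σ_k ξ_k A^k`, where `(A^k)_{ij} = c_i^{kj}`. -/
def pSymb {n : ℕ} (ξ : Fin n → ℝ) (c : Fin n → Fin n → Fin n → ℝ) :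
    Matrix (Fin n) (Fin n) ℝ :=
  Matrix.of fun i j => ∑ k, ξ k * c i k j

/-- The scaled parameter collection `t • c` (normalized entries unchanged). -/
def pScale {n : ℕ} (t : ℝ) (c : Fin n → Fin n → Fin n → ℝ) :
    Fin n → Fin n → Fin n → ℝ :=
  fun i k j => if k = j then c i k j else t * c i k j

/-! ### Auxiliary forward-mode differentiation framework -/

def D1 (f : (Fin 11 → ℝ) → ℝ) (W : Fin 11 → ℝ) (g : (Fin 11 → ℝ) → ℝ) : Prop :=
  ∃ L : (Fin 11 → ℝ) →L[ℝ] ℝ, HasStrictFDerivAt f L W ∧ ∀ v, L v = g v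

theorem D1_proj (i : Fin 11) (W : Fin 11 → ℝ) : D1 (fun w => w i) W (fun v => v i) :=
  ⟨ContinuousLinearMap.proj i,
    (ContinuousLinearMap.proj i (R := ℝ) (φ := fun _ : Fin 11 => ℝ)).hasStrictFDerivAt,
    fun _ => rfl⟩

theorem D1_const (r : ℝ) (W : Fin 11 → ℝ) : D1 (fun _ => r) W (fun _ => 0) :=
  ⟨0, hasStrictFDerivAt_const r W, fun _ => rfl⟩

theorem D1.add {f f' g g' W} (hf : D1 f W f') (hg : D1 g W g') :
    D1 (fun w => f w + g w) W (fun v => f' v + g' v) := by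
  obtain ⟨L, hL, hLv⟩ := hf; obtain ⟨M, hM, hMv⟩ := hg
  exact ⟨L + M, hL.add hM, fun v => by simp [hLv, hMv]⟩

theorem D1.mul {f f' g g' W} (hf : D1 f W f') (hg : D1 g W g') :
    D1 (fun w => f w * g w) W (fun v => f W * g' v + g W * f' v) := by
  obtain ⟨L, hL, hLv⟩ := hf; obtain ⟨M, hM, hMv⟩ := hg
  exact ⟨f W • M + g W • L, hL.mul hM, fun v => by simp [hLv, hMv]⟩

theorem D1.sub {f f' g g' W} (hf : D1 f W f') (hg : D1 g W g') :
    D1 (fun w => f w - g w) W (fun v => f' v - g' v) := by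
  obtain ⟨L, hL, hLv⟩ := hf; obtain ⟨M, hM, hMv⟩ := hg
  exact ⟨L - M, hL.sub hM, fun v => by simp [hLv, hMv]⟩

theorem D1.congr {f f' g W} (hf : D1 f W f') (h : ∀ v, f' v = g v) : D1 f W g := by
  obtain ⟨L, hL, hLv⟩ := hf
  exact ⟨L, hL, fun v => (hLv v).trans (h v)⟩

theorem D1.const_mul {f f' W} (hf : D1 f W f') (r : ℝ) :
    D1 (fun w => r * f w) W (fun v => r * f' v) :=
  ((D1_const r W).mul hf).congr (fun v => by simp)

theorem D1.mul_const {f f' W} (hf : D1 f W f') (r : ℝ) :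
    D1 (fun w => f w * r) W (fun v => f' v * r) :=
  (hf.mul (D1_const r W)).congr (fun v => by simp [mul_comm])

/-! ### The nonlinear system -/

def Qf (c : Fin 5 → Fin 5 → Fin 5 → ℝ) (a2 : ℝ) (w : Fin 11 → ℝ) (i j : Fin 5) : ℝ :=
  w 0 * w 1 * c i 0 j + w 0 * w 2 * c i 1 j + a2 * c i 2 j + w 3 * c i 3 j + w 4 * c i 4 j

theorem D1_Qf (c a2) (i j : Fin 5) (W : Fin 11 → ℝ) (hW0 : W 0 = 0) :
    D1 (fun w => Qf c a2 w i j) W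
      (fun v => v 0 * W 1 * c i 0 j + v 0 * W 2 * c i 1 j + v 3 * c i 3 j + v 4 * c i 4 j) := by
  unfold Qf
  exact (((((D1_proj 0 W).mul (D1_proj 1 W)).mul_const _).add
    (((D1_proj 0 W).mul (D1_proj 2 W)).mul_const _)).add (D1_const _ W) |>.add
    ((D1_proj 3 W).mul_const _) |>.add ((D1_proj 4 W).mul_const _)).congr
    (fun v => by simp [hW0]; ring)

def cmpF (c : Fin 5 → Fin 5 → Fin 5 → ℝ) (a2 : ℝ) (i j0 : Fin 5) (p q r : Fin 11)
    (pre : (Fin 11 → ℝ) → ℝ) (w : Fin 11 → ℝ) : ℝ :=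
  pre w + Qf c a2 w i j0
    + w 0 * (Qf c a2 w i 2 * w p + Qf c a2 w i 3 * w q + Qf c a2 w i 4 * w r)

theorem D1_cmpF (c a2) (i j0 : Fin 5) (p q r : Fin 11) {pre pre'} (W : Fin 11 → ℝ)
    (hW0 : W 0 = 0) (hpre : D1 pre W pre') :
    D1 (cmpF c a2 i j0 p q r pre) W
      (fun v => pre' v
        + (v 0 * W 1 * c i 0 j0 + v 0 * W 2 * c i 1 j0 + v 3 * c i 3 j0 + v 4 * c i 4 j0)
        + v 0 * (Qf c a2 W i 2 * W p + Qf c a2 W i 3 * W q + Qf c a2 W i 4 * W r)) := by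
  unfold cmpF
  refine ((hpre.add (D1_Qf c a2 i j0 W hW0)).add
    ((D1_proj 0 W).mul ((((D1_Qf c a2 i 2 W hW0).mul (D1_proj p W)).add
      ((D1_Qf c a2 i 3 W hW0).mul (D1_proj q W))).add
      ((D1_Qf c a2 i 4 W hW0).mul (D1_proj r W))))).congr (fun v => ?_)
  simp [hW0]; ring

theorem D1_pre {e e' W} (hW0 : W 0 = 0) (he : D1 e W e') :
    D1 (fun w => (1 - w 0) * e w) W (fun v => e' v - v 0 * e W) :=
  (((D1_const 1 W).sub (D1_proj 0 W)).mul he).congr (fun v => by simp [hW0]; ring)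

def Ff (c : Fin 5 → Fin 5 → Fin 5 → ℝ) (a2 : ℝ) (w : Fin 11 → ℝ) : Fin 11 → ℝ :=
![w 0,
  cmpF c a2 0 0 5 6 7 (fun w => (1 - w 0) * w 1) w,
  cmpF c a2 1 0 5 6 7 (fun _ => 0) w,
  cmpF c a2 0 1 8 9 10 (fun _ => 0) w,
  cmpF c a2 1 1 8 9 10 (fun w => (1 - w 0) * w 2) w,
  cmpF c a2 2 0 5 6 7 (fun w => (1 - w 0) * (a2 * w 5)) w,
  cmpF c a2 3 0 5 6 7 (fun w => (1 - w 0) * (w 3 * w 6)) w,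
  cmpF c a2 4 0 5 6 7 (fun w => (1 - w 0) * (w 4 * w 7)) w,
  cmpF c a2 2 1 8 9 10 (fun w => (1 - w 0) * (a2 * w 8)) w,
  cmpF c a2 3 1 8 9 10 (fun w => (1 - w 0) * (w 3 * w 9)) w,
  cmpF c a2 4 1 8 9 10 (fun w => (1 - w 0) * (w 4 * w 10)) w]

def gQ (c : Fin 5 → Fin 5 → Fin 5 → ℝ) (W v : Fin 11 → ℝ) (i j0 : Fin 5) : ℝ :=
  v 0 * W 1 * c i 0 j0 + v 0 * W 2 * c i 1 j0 + v 3 * c i 3 j0 + v 4 * c i 4 j0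

def QW (c : Fin 5 → Fin 5 → Fin 5 → ℝ) (a2 : ℝ) (W : Fin 11 → ℝ) (i j : Fin 5) : ℝ :=
  a2 * c i 2 j + W 3 * c i 3 j + W 4 * c i 4 j

def Jv (c : Fin 5 → Fin 5 → Fin 5 → ℝ) (a2 : ℝ) (W v : Fin 11 → ℝ) : Fin 11 → ℝ :=
![v 0,
  (v 1 - v 0 * W 1) + gQ c W v 0 0 + v 0 * (QW c a2 W 0 2 * W 5 + QW c a2 W 0 3 * W 6 + QW c a2 W 0 4 * W 7),
  gQ c W v 1 0 + v 0 * (QW c a2 W 1 2 * W 5 + QW c a2 W 1 3 * W 6 + QW c a2 W 1 4 * W 7),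
  gQ c W v 0 1 + v 0 * (QW c a2 W 0 2 * W 8 + QW c a2 W 0 3 * W 9 + QW c a2 W 0 4 * W 10),
  (v 2 - v 0 * W 2) + gQ c W v 1 1 + v 0 * (QW c a2 W 1 2 * W 8 + QW c a2 W 1 3 * W 9 + QW c a2 W 1 4 * W 10),
  (a2 * v 5 - v 0 * (a2 * W 5)) + gQ c W v 2 0 + v 0 * (QW c a2 W 2 2 * W 5 + QW c a2 W 2 3 * W 6 + QW c a2 W 2 4 * W 7),
  ((W 3 * v 6 + W 6 * v 3) - v 0 * (W 3 * W 6)) + gQ c W v 3 0 + v 0 * (QW c a2 W 3 2 * W 5 + QW c a2 W 3 3 * W 6 + QW c a2 W 3 4 * W 7),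
  ((W 4 * v 7 + W 7 * v 4) - v 0 * (W 4 * W 7)) + gQ c W v 4 0 + v 0 * (QW c a2 W 4 2 * W 5 + QW c a2 W 4 3 * W 6 + QW c a2 W 4 4 * W 7),
  (a2 * v 8 - v 0 * (a2 * W 8)) + gQ c W v 2 1 + v 0 * (QW c a2 W 2 2 * W 8 + QW c a2 W 2 3 * W 9 + QW c a2 W 2 4 * W 10),
  ((W 3 * v 9 + W 9 * v 3) - v 0 * (W 3 * W 9)) + gQ c W v 3 1 + v 0 * (QW c a2 W 3 2 * W 8 + QW c a2 W 3 3 * W 9 + QW c a2 W 3 4 * W 10),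
  ((W 4 * v 10 + W 10 * v 4) - v 0 * (W 4 * W 10)) + gQ c W v 4 1 + v 0 * (QW c a2 W 4 2 * W 8 + QW c a2 W 4 3 * W 9 + QW c a2 W 4 4 * W 10)]

theorem D1_cmpF' (c a2) (i j0 : Fin 5) (p q r : Fin 11) {pre pre'} (W : Fin 11 → ℝ)
    (hW0 : W 0 = 0) (hpre : D1 pre W pre') :
    D1 (cmpF c a2 i j0 p q r pre) W
      (fun v => pre' v + gQ c W v i j0
        + v 0 * (QW c a2 W i 2 * W p + QW c a2 W i 3 * W q + QW c a2 W i 4 * W r)) :=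
  (D1_cmpF c a2 i j0 p q r W hW0 hpre).congr
    (fun v => by simp [gQ, QW, Qf, hW0]; try ring)

theorem exists_deriv (c : Fin 5 → Fin 5 → Fin 5 → ℝ) (a2 : ℝ) (W : Fin 11 → ℝ)
    (hW0 : W 0 = 0) :
    ∃ L : (Fin 11 → ℝ) →L[ℝ] (Fin 11 → ℝ), HasStrictFDerivAt (Ff c a2) L W ∧
      ∀ v, L v = Jv c a2 W v := by
  have hD : ∀ i, D1 (fun w => Ff c a2 w i) W (fun v => Jv c a2 W v i) := by
    intro i
    fin_cases i
    · exact (D1_proj 0 W).congr (fun v => rfl)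
    · exact (D1_cmpF' c a2 0 0 5 6 7 W hW0 (D1_pre hW0 (D1_proj 1 W))).congr (fun v => rfl)
    · exact (D1_cmpF' c a2 1 0 5 6 7 W hW0 (D1_const 0 W)).congr (fun v => by
        rw [zero_add]; rfl)
    · exact (D1_cmpF' c a2 0 1 8 9 10 W hW0 (D1_const 0 W)).congr (fun v => by
        rw [zero_add]; rfl)
    · exact (D1_cmpF' c a2 1 1 8 9 10 W hW0 (D1_pre hW0 (D1_proj 2 W))).congr (fun v => rfl)
    · exact (D1_cmpF' c a2 2 0 5 6 7 W hW0 (D1_pre hW0 ((D1_proj 5 W).const_mul a2))).congr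
        (fun v => rfl)
    · exact (D1_cmpF' c a2 3 0 5 6 7 W hW0 (D1_pre hW0 ((D1_proj 3 W).mul (D1_proj 6 W)))).congr
        (fun v => rfl)
    · exact (D1_cmpF' c a2 4 0 5 6 7 W hW0 (D1_pre hW0 ((D1_proj 4 W).mul (D1_proj 7 W)))).congr
        (fun v => rfl)
    · exact (D1_cmpF' c a2 2 1 8 9 10 W hW0 (D1_pre hW0 ((D1_proj 8 W).const_mul a2))).congr
        (fun v => rfl)
    · exact (D1_cmpF' c a2 3 1 8 9 10 W hW0 (D1_pre hW0 ((D1_proj 3 W).mul (D1_proj 9 W)))).congr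
        (fun v => rfl)
    · exact (D1_cmpF' c a2 4 1 8 9 10 W hW0 (D1_pre hW0 ((D1_proj 4 W).mul (D1_proj 10 W)))).congr
        (fun v => rfl)
  choose Ls hLs hLsv using hD
  refine ⟨ContinuousLinearMap.pi Ls, hasStrictFDerivAt_pi'.2 (fun i => ?_), fun v => ?_⟩
  · rw [ContinuousLinearMap.proj_pi]; exact hLs i
  · funext i; exact hLsv i v

/-! ### Injectivity of the linearization -/

theorem Jv_inj (c : Fin 5 → Fin 5 → Fin 5 → ℝ) (a2 a3 a4 : ℝ)
    (ha2 : a2 ≠ 0) (ha3 : a3 ≠ 0) (ha4 : a4 ≠ 0)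
    (hC1' : c 0 3 1 * c 1 4 0 ≠ c 1 3 0 * c 0 4 1)
    (W : Fin 11 → ℝ) (hW3 : W 3 = a3) (hW4 : W 4 = a4)
    (v : Fin 11 → ℝ) (hJ : Jv c a2 W v = 0) : v = 0 := by
  have h0 : v 0 = 0 := congrFun hJ 0
  have h2 : gQ c W v 1 0 + v 0 * (QW c a2 W 1 2 * W 5 + QW c a2 W 1 3 * W 6 + QW c a2 W 1 4 * W 7) = 0 := congrFun hJ 2
  have h3 : gQ c W v 0 1 + v 0 * (QW c a2 W 0 2 * W 8 + QW c a2 W 0 3 * W 9 + QW c a2 W 0 4 * W 10) = 0 := congrFun hJ 3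
  simp only [gQ, QW] at h2 h3
  rw [h0] at h2 h3
  have h2' : v 3 * c 1 3 0 + v 4 * c 1 4 0 = 0 := by linear_combination h2
  have h3' : v 3 * c 0 3 1 + v 4 * c 0 4 1 = 0 := by linear_combination h3
  have hdet : c 1 3 0 * c 0 4 1 - c 0 3 1 * c 1 4 0 ≠ 0 :=
    sub_ne_zero.mpr (Ne.symm hC1')
  have hv3 : v 3 = 0 := by
    have : v 3 * (c 1 3 0 * c 0 4 1 - c 0 3 1 * c 1 4 0) = 0 := by
      linear_combination c 0 4 1 * h2' - c 1 4 0 * h3'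
    rcases mul_eq_zero.mp this with h | h
    · exact h
    · exact absurd h hdet
  have hv4 : v 4 = 0 := by
    have : v 4 * (c 1 3 0 * c 0 4 1 - c 0 3 1 * c 1 4 0) = 0 := by
      linear_combination -(c 0 3 1) * h2' + c 1 3 0 * h3'
    rcases mul_eq_zero.mp this with h | h
    · exact h
    · exact absurd h hdet
  have h1 : (v 1 - v 0 * W 1) + gQ c W v 0 0 + v 0 * (QW c a2 W 0 2 * W 5 + QW c a2 W 0 3 * W 6 + QW c a2 W 0 4 * W 7) = 0 := congrFun hJ 1
  have h4 : (v 2 - v 0 * W 2) + gQ c W v 1 1 + v 0 * (QW c a2 W 1 2 * W 8 + QW c a2 W 1 3 * W 9 + QW c a2 W 1 4 * W 10) = 0 := congrFun hJ 4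
  have h5 : (a2 * v 5 - v 0 * (a2 * W 5)) + gQ c W v 2 0 + v 0 * (QW c a2 W 2 2 * W 5 + QW c a2 W 2 3 * W 6 + QW c a2 W 2 4 * W 7) = 0 := congrFun hJ 5
  have h6 : ((W 3 * v 6 + W 6 * v 3) - v 0 * (W 3 * W 6)) + gQ c W v 3 0 + v 0 * (QW c a2 W 3 2 * W 5 + QW c a2 W 3 3 * W 6 + QW c a2 W 3 4 * W 7) = 0 := congrFun hJ 6
  have h7 : ((W 4 * v 7 + W 7 * v 4) - v 0 * (W 4 * W 7)) + gQ c W v 4 0 + v 0 * (QW c a2 W 4 2 * W 5 + QW c a2 W 4 3 * W 6 + QW c a2 W 4 4 * W 7) = 0 := congrFun hJ 7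
  have h8 : (a2 * v 8 - v 0 * (a2 * W 8)) + gQ c W v 2 1 + v 0 * (QW c a2 W 2 2 * W 8 + QW c a2 W 2 3 * W 9 + QW c a2 W 2 4 * W 10) = 0 := congrFun hJ 8
  have h9 : ((W 3 * v 9 + W 9 * v 3) - v 0 * (W 3 * W 9)) + gQ c W v 3 1 + v 0 * (QW c a2 W 3 2 * W 8 + QW c a2 W 3 3 * W 9 + QW c a2 W 3 4 * W 10) = 0 := congrFun hJ 9
  have h10 : ((W 4 * v 10 + W 10 * v 4) - v 0 * (W 4 * W 10)) + gQ c W v 4 1 + v 0 * (QW c a2 W 4 2 * W 8 + QW c a2 W 4 3 * W 9 + QW c a2 W 4 4 * W 10) = 0 := congrFun hJ 10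
  simp only [gQ, QW] at h1 h4 h5 h6 h7 h8 h9 h10
  rw [h0, hv3, hv4] at h1 h4 h5 h6 h7 h8 h9 h10
  have hv1 : v 1 = 0 := by linear_combination h1
  have hv2 : v 2 = 0 := by linear_combination h4
  have hv5 : v 5 = 0 := by
    have : a2 * v 5 = 0 := by linear_combination h5
    exact (mul_eq_zero.mp this).resolve_left ha2
  have hv6 : v 6 = 0 := by
    rw [hW3] at h6
    have : a3 * v 6 = 0 := by linear_combination h6
    exact (mul_eq_zero.mp this).resolve_left ha3
  have hv7 : v 7 = 0 := by
    rw [hW4] at h7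
    have : a4 * v 7 = 0 := by linear_combination h7
    exact (mul_eq_zero.mp this).resolve_left ha4
  have hv8 : v 8 = 0 := by
    have : a2 * v 8 = 0 := by linear_combination h8
    exact (mul_eq_zero.mp this).resolve_left ha2
  have hv9 : v 9 = 0 := by
    rw [hW3] at h9
    have : a3 * v 9 = 0 := by linear_combination h9
    exact (mul_eq_zero.mp this).resolve_left ha3
  have hv10 : v 10 = 0 := by
    rw [hW4] at h10
    have : a4 * v 10 = 0 := by linear_combination h10
    exact (mul_eq_zero.mp this).resolve_left ha4
  funext i
  fin_cases i <;> first
    | exact h0 | exact hv1 | exact hv2 | exact hv3 | exact hv4 | exact hv5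
    | exact hv6 | exact hv7 | exact hv8 | exact hv9 | exact hv10

/-! ### The base point -/

noncomputable def Wpt (c : Fin 5 → Fin 5 → Fin 5 → ℝ) (a2 a3 a4 : ℝ) : Fin 11 → ℝ :=
![0,
  -(a2 * c 0 2 0 + a3 * c 0 3 0 + a4 * c 0 4 0),
  -(a2 * c 1 2 1 + a3 * c 1 3 1 + a4 * c 1 4 1),
  a3, a4,
  -(a2 * c 2 2 0 + a3 * c 2 3 0 + a4 * c 2 4 0) / a2,
  -(a2 * c 3 2 0 + a3 * c 3 3 0 + a4 * c 3 4 0) / a3,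
  -(a2 * c 4 2 0 + a3 * c 4 3 0 + a4 * c 4 4 0) / a4,
  -(a2 * c 2 2 1 + a3 * c 2 3 1 + a4 * c 2 4 1) / a2,
  -(a2 * c 3 2 1 + a3 * c 3 3 1 + a4 * c 3 4 1) / a3,
  -(a2 * c 4 2 1 + a3 * c 4 3 1 + a4 * c 4 4 1) / a4]

section WptEnt
variable (c : Fin 5 → Fin 5 → Fin 5 → ℝ) (a2 a3 a4 : ℝ)
theorem Wpt_0 : Wpt c a2 a3 a4 0 = 0 := rfl
theorem Wpt_1 : Wpt c a2 a3 a4 1 = -(a2 * c 0 2 0 + a3 * c 0 3 0 + a4 * c 0 4 0) := rfl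
theorem Wpt_2 : Wpt c a2 a3 a4 2 = -(a2 * c 1 2 1 + a3 * c 1 3 1 + a4 * c 1 4 1) := rfl
theorem Wpt_3 : Wpt c a2 a3 a4 3 = a3 := rfl
theorem Wpt_4 : Wpt c a2 a3 a4 4 = a4 := rfl
theorem Wpt_5 : Wpt c a2 a3 a4 5 = -(a2 * c 2 2 0 + a3 * c 2 3 0 + a4 * c 2 4 0) / a2 := rfl
theorem Wpt_6 : Wpt c a2 a3 a4 6 = -(a2 * c 3 2 0 + a3 * c 3 3 0 + a4 * c 3 4 0) / a3 := rfl
theorem Wpt_7 : Wpt c a2 a3 a4 7 = -(a2 * c 4 2 0 + a3 * c 4 3 0 + a4 * c 4 4 0) / a4 := rfl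
theorem Wpt_8 : Wpt c a2 a3 a4 8 = -(a2 * c 2 2 1 + a3 * c 2 3 1 + a4 * c 2 4 1) / a2 := rfl
theorem Wpt_9 : Wpt c a2 a3 a4 9 = -(a2 * c 3 2 1 + a3 * c 3 3 1 + a4 * c 3 4 1) / a3 := rfl
theorem Wpt_10 : Wpt c a2 a3 a4 10 = -(a2 * c 4 2 1 + a3 * c 4 3 1 + a4 * c 4 4 1) / a4 := rfl
end WptEnt

theorem Ff_base (c : Fin 5 → Fin 5 → Fin 5 → ℝ) (a2 a3 a4 : ℝ)
    (ha2 : a2 ≠ 0) (ha3 : a3 ≠ 0) (ha4 : a4 ≠ 0)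
    (heq1 : c 0 2 1 * a2 + c 0 3 1 * a3 + c 0 4 1 * a4 = 0)
    (heq2 : c 1 2 0 * a2 + c 1 3 0 * a3 + c 1 4 0 * a4 = 0) :
    Ff c a2 (Wpt c a2 a3 a4) = 0 := by
  have e5 : a2 * (-(a2 * c 2 2 0 + a3 * c 2 3 0 + a4 * c 2 4 0) / a2)
      = -(a2 * c 2 2 0 + a3 * c 2 3 0 + a4 * c 2 4 0) := mul_div_cancel₀ _ ha2
  have e6 : a3 * (-(a2 * c 3 2 0 + a3 * c 3 3 0 + a4 * c 3 4 0) / a3)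
      = -(a2 * c 3 2 0 + a3 * c 3 3 0 + a4 * c 3 4 0) := mul_div_cancel₀ _ ha3
  have e7 : a4 * (-(a2 * c 4 2 0 + a3 * c 4 3 0 + a4 * c 4 4 0) / a4)
      = -(a2 * c 4 2 0 + a3 * c 4 3 0 + a4 * c 4 4 0) := mul_div_cancel₀ _ ha4
  have e8 : a2 * (-(a2 * c 2 2 1 + a3 * c 2 3 1 + a4 * c 2 4 1) / a2)
      = -(a2 * c 2 2 1 + a3 * c 2 3 1 + a4 * c 2 4 1) := mul_div_cancel₀ _ ha2
  have e9 : a3 * (-(a2 * c 3 2 1 + a3 * c 3 3 1 + a4 * c 3 4 1) / a3)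
      = -(a2 * c 3 2 1 + a3 * c 3 3 1 + a4 * c 3 4 1) := mul_div_cancel₀ _ ha3
  have e10 : a4 * (-(a2 * c 4 2 1 + a3 * c 4 3 1 + a4 * c 4 4 1) / a4)
      = -(a2 * c 4 2 1 + a3 * c 4 3 1 + a4 * c 4 4 1) := mul_div_cancel₀ _ ha4
  funext i
  fin_cases i
  · rfl
  · show cmpF c a2 0 0 5 6 7 (fun w => (1 - w 0) * w 1) (Wpt c a2 a3 a4) = 0
    simp only [cmpF, Qf]
    rw [Wpt_0, Wpt_1, Wpt_2, Wpt_3, Wpt_4]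
    ring
  · show cmpF c a2 1 0 5 6 7 (fun _ => 0) (Wpt c a2 a3 a4) = 0
    simp only [cmpF, Qf]
    rw [Wpt_0, Wpt_1, Wpt_2, Wpt_3, Wpt_4]
    linear_combination heq2
  · show cmpF c a2 0 1 8 9 10 (fun _ => 0) (Wpt c a2 a3 a4) = 0
    simp only [cmpF, Qf]
    rw [Wpt_0, Wpt_1, Wpt_2, Wpt_3, Wpt_4]
    linear_combination heq1
  · show cmpF c a2 1 1 8 9 10 (fun w => (1 - w 0) * w 2) (Wpt c a2 a3 a4) = 0
    simp only [cmpF, Qf]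
    rw [Wpt_0, Wpt_1, Wpt_2, Wpt_3, Wpt_4]
    ring
  · show cmpF c a2 2 0 5 6 7 (fun w => (1 - w 0) * (a2 * w 5)) (Wpt c a2 a3 a4) = 0
    simp only [cmpF, Qf]
    rw [Wpt_0, Wpt_1, Wpt_2, Wpt_3, Wpt_4]
    rw [Wpt_5, e5]; ring
  · show cmpF c a2 3 0 5 6 7 (fun w => (1 - w 0) * (w 3 * w 6)) (Wpt c a2 a3 a4) = 0
    simp only [cmpF, Qf]
    rw [Wpt_0, Wpt_1, Wpt_2, Wpt_3, Wpt_4]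
    rw [Wpt_6, e6]; ring
  · show cmpF c a2 4 0 5 6 7 (fun w => (1 - w 0) * (w 4 * w 7)) (Wpt c a2 a3 a4) = 0
    simp only [cmpF, Qf]
    rw [Wpt_0, Wpt_1, Wpt_2, Wpt_3, Wpt_4]
    rw [Wpt_7, e7]; ring
  · show cmpF c a2 2 1 8 9 10 (fun w => (1 - w 0) * (a2 * w 8)) (Wpt c a2 a3 a4) = 0
    simp only [cmpF, Qf]
    rw [Wpt_0, Wpt_1, Wpt_2, Wpt_3, Wpt_4]
    rw [Wpt_8, e8]; ring
  · show cmpF c a2 3 1 8 9 10 (fun w => (1 - w 0) * (w 3 * w 9)) (Wpt c a2 a3 a4) = 0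
    simp only [cmpF, Qf]
    rw [Wpt_0, Wpt_1, Wpt_2, Wpt_3, Wpt_4]
    rw [Wpt_9, e9]; ring
  · show cmpF c a2 4 1 8 9 10 (fun w => (1 - w 0) * (w 4 * w 10)) (Wpt c a2 a3 a4) = 0
    simp only [cmpF, Qf]
    rw [Wpt_0, Wpt_1, Wpt_2, Wpt_3, Wpt_4]
    rw [Wpt_10, e10]; ring

/-! ### Key algebraic identities -/

theorem keyx (c : Fin 5 → Fin 5 → Fin 5 → ℝ) (hc : IsParamColl 5 c) (a2 : ℝ)
    (w : Fin 11 → ℝ) :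
    (pSymb ![w 0 * w 1, w 0 * w 2, a2, w 3, w 4] (pScale (w 0) c)).mulVec
        ![1, 0, w 0 * w 5, w 0 * w 6, w 0 * w 7]
      = ![w 0 * Ff c a2 w 1, w 0 * Ff c a2 w 2, w 0 * Ff c a2 w 5,
          w 0 * Ff c a2 w 6, w 0 * Ff c a2 w 7] := by
  obtain ⟨hsym, hdiag, hoff⟩ := hc
  have d0 := hdiag 0; have d1 := hdiag 1; have d2 := hdiag 2
  have d3 := hdiag 3; have d4 := hdiag 4
  funext i
  fin_cases i
  · show (pSymb ![w 0 * w 1, w 0 * w 2, a2, w 3, w 4] (pScale (w 0) c)).mulVec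
        ![1, 0, w 0 * w 5, w 0 * w 6, w 0 * w 7] (0 : Fin 5)
      = w 0 * cmpF c a2 0 0 5 6 7 (fun w => (1 - w 0) * w 1) w
    simp only [pSymb, pScale, Matrix.mulVec, dotProduct, Fin.sum_univ_five, cmpF, Qf,
      Matrix.cons_val_zero, Matrix.cons_val_one, Matrix.head_cons, Matrix.cons_val_two,
      Matrix.tail_cons, Matrix.cons_val_three, Matrix.cons_val_four, Matrix.of_apply,
      Fin.isValue, Fin.reduceEq, reduceIte]
    simp only [hoff 0 1 (by decide), hoff 0 2 (by decide), hoff 0 3 (by decide),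
      hoff 0 4 (by decide), hoff 1 0 (by decide), hoff 1 2 (by decide), hoff 1 3 (by decide),
      hoff 1 4 (by decide), hoff 2 0 (by decide), hoff 2 1 (by decide), hoff 2 3 (by decide),
      hoff 2 4 (by decide), hoff 3 0 (by decide), hoff 3 1 (by decide), hoff 3 2 (by decide),
      hoff 3 4 (by decide), hoff 4 0 (by decide), hoff 4 1 (by decide), hoff 4 2 (by decide),
      hoff 4 3 (by decide), d0, d1, d2, d3, d4]
    ring
  · show (pSymb ![w 0 * w 1, w 0 * w 2, a2, w 3, w 4] (pScale (w 0) c)).mulVec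
        ![1, 0, w 0 * w 5, w 0 * w 6, w 0 * w 7] (1 : Fin 5)
      = w 0 * cmpF c a2 1 0 5 6 7 (fun _ => 0) w
    simp only [pSymb, pScale, Matrix.mulVec, dotProduct, Fin.sum_univ_five, cmpF, Qf,
      Matrix.cons_val_zero, Matrix.cons_val_one, Matrix.head_cons, Matrix.cons_val_two,
      Matrix.tail_cons, Matrix.cons_val_three, Matrix.cons_val_four, Matrix.of_apply,
      Fin.isValue, Fin.reduceEq, reduceIte]
    simp only [hoff 0 1 (by decide), hoff 0 2 (by decide), hoff 0 3 (by decide),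
      hoff 0 4 (by decide), hoff 1 0 (by decide), hoff 1 2 (by decide), hoff 1 3 (by decide),
      hoff 1 4 (by decide), hoff 2 0 (by decide), hoff 2 1 (by decide), hoff 2 3 (by decide),
      hoff 2 4 (by decide), hoff 3 0 (by decide), hoff 3 1 (by decide), hoff 3 2 (by decide),
      hoff 3 4 (by decide), hoff 4 0 (by decide), hoff 4 1 (by decide), hoff 4 2 (by decide),
      hoff 4 3 (by decide), d0, d1, d2, d3, d4]
    ring
  · show (pSymb ![w 0 * w 1, w 0 * w 2, a2, w 3, w 4] (pScale (w 0) c)).mulVec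
        ![1, 0, w 0 * w 5, w 0 * w 6, w 0 * w 7] (2 : Fin 5)
      = w 0 * cmpF c a2 2 0 5 6 7 (fun w => (1 - w 0) * (a2 * w 5)) w
    simp only [pSymb, pScale, Matrix.mulVec, dotProduct, Fin.sum_univ_five, cmpF, Qf,
      Matrix.cons_val_zero, Matrix.cons_val_one, Matrix.head_cons, Matrix.cons_val_two,
      Matrix.tail_cons, Matrix.cons_val_three, Matrix.cons_val_four, Matrix.of_apply,
      Fin.isValue, Fin.reduceEq, reduceIte]
    simp only [hoff 0 1 (by decide), hoff 0 2 (by decide), hoff 0 3 (by decide),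
      hoff 0 4 (by decide), hoff 1 0 (by decide), hoff 1 2 (by decide), hoff 1 3 (by decide),
      hoff 1 4 (by decide), hoff 2 0 (by decide), hoff 2 1 (by decide), hoff 2 3 (by decide),
      hoff 2 4 (by decide), hoff 3 0 (by decide), hoff 3 1 (by decide), hoff 3 2 (by decide),
      hoff 3 4 (by decide), hoff 4 0 (by decide), hoff 4 1 (by decide), hoff 4 2 (by decide),
      hoff 4 3 (by decide), d0, d1, d2, d3, d4]
    ring
  · show (pSymb ![w 0 * w 1, w 0 * w 2, a2, w 3, w 4] (pScale (w 0) c)).mulVec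
        ![1, 0, w 0 * w 5, w 0 * w 6, w 0 * w 7] (3 : Fin 5)
      = w 0 * cmpF c a2 3 0 5 6 7 (fun w => (1 - w 0) * (w 3 * w 6)) w
    simp only [pSymb, pScale, Matrix.mulVec, dotProduct, Fin.sum_univ_five, cmpF, Qf,
      Matrix.cons_val_zero, Matrix.cons_val_one, Matrix.head_cons, Matrix.cons_val_two,
      Matrix.tail_cons, Matrix.cons_val_three, Matrix.cons_val_four, Matrix.of_apply,
      Fin.isValue, Fin.reduceEq, reduceIte]
    simp only [hoff 0 1 (by decide), hoff 0 2 (by decide), hoff 0 3 (by decide),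
      hoff 0 4 (by decide), hoff 1 0 (by decide), hoff 1 2 (by decide), hoff 1 3 (by decide),
      hoff 1 4 (by decide), hoff 2 0 (by decide), hoff 2 1 (by decide), hoff 2 3 (by decide),
      hoff 2 4 (by decide), hoff 3 0 (by decide), hoff 3 1 (by decide), hoff 3 2 (by decide),
      hoff 3 4 (by decide), hoff 4 0 (by decide), hoff 4 1 (by decide), hoff 4 2 (by decide),
      hoff 4 3 (by decide), d0, d1, d2, d3, d4]
    ring
  · show (pSymb ![w 0 * w 1, w 0 * w 2, a2, w 3, w 4] (pScale (w 0) c)).mulVec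
        ![1, 0, w 0 * w 5, w 0 * w 6, w 0 * w 7] (4 : Fin 5)
      = w 0 * cmpF c a2 4 0 5 6 7 (fun w => (1 - w 0) * (w 4 * w 7)) w
    simp only [pSymb, pScale, Matrix.mulVec, dotProduct, Fin.sum_univ_five, cmpF, Qf,
      Matrix.cons_val_zero, Matrix.cons_val_one, Matrix.head_cons, Matrix.cons_val_two,
      Matrix.tail_cons, Matrix.cons_val_three, Matrix.cons_val_four, Matrix.of_apply,
      Fin.isValue, Fin.reduceEq, reduceIte]
    simp only [hoff 0 1 (by decide), hoff 0 2 (by decide), hoff 0 3 (by decide),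
      hoff 0 4 (by decide), hoff 1 0 (by decide), hoff 1 2 (by decide), hoff 1 3 (by decide),
      hoff 1 4 (by decide), hoff 2 0 (by decide), hoff 2 1 (by decide), hoff 2 3 (by decide),
      hoff 2 4 (by decide), hoff 3 0 (by decide), hoff 3 1 (by decide), hoff 3 2 (by decide),
      hoff 3 4 (by decide), hoff 4 0 (by decide), hoff 4 1 (by decide), hoff 4 2 (by decide),
      hoff 4 3 (by decide), d0, d1, d2, d3, d4]
    ring

theorem keyy (c : Fin 5 → Fin 5 → Fin 5 → ℝ) (hc : IsParamColl 5 c) (a2 : ℝ)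
    (w : Fin 11 → ℝ) :
    (pSymb ![w 0 * w 1, w 0 * w 2, a2, w 3, w 4] (pScale (w 0) c)).mulVec
        ![0, 1, w 0 * w 8, w 0 * w 9, w 0 * w 10]
      = ![w 0 * Ff c a2 w 3, w 0 * Ff c a2 w 4, w 0 * Ff c a2 w 8,
          w 0 * Ff c a2 w 9, w 0 * Ff c a2 w 10] := by
  obtain ⟨hsym, hdiag, hoff⟩ := hc
  have d0 := hdiag 0; have d1 := hdiag 1; have d2 := hdiag 2
  have d3 := hdiag 3; have d4 := hdiag 4
  funext i
  fin_cases i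
  · show (pSymb ![w 0 * w 1, w 0 * w 2, a2, w 3, w 4] (pScale (w 0) c)).mulVec
        ![0, 1, w 0 * w 8, w 0 * w 9, w 0 * w 10] (0 : Fin 5)
      = w 0 * cmpF c a2 0 1 8 9 10 (fun _ => 0) w
    simp only [pSymb, pScale, Matrix.mulVec, dotProduct, Fin.sum_univ_five, cmpF, Qf,
      Matrix.cons_val_zero, Matrix.cons_val_one, Matrix.head_cons, Matrix.cons_val_two,
      Matrix.tail_cons, Matrix.cons_val_three, Matrix.cons_val_four, Matrix.of_apply,
      Fin.isValue, Fin.reduceEq, reduceIte]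
    simp only [hoff 0 1 (by decide), hoff 0 2 (by decide), hoff 0 3 (by decide),
      hoff 0 4 (by decide), hoff 1 0 (by decide), hoff 1 2 (by decide), hoff 1 3 (by decide),
      hoff 1 4 (by decide), hoff 2 0 (by decide), hoff 2 1 (by decide), hoff 2 3 (by decide),
      hoff 2 4 (by decide), hoff 3 0 (by decide), hoff 3 1 (by decide), hoff 3 2 (by decide),
      hoff 3 4 (by decide), hoff 4 0 (by decide), hoff 4 1 (by decide), hoff 4 2 (by decide),
      hoff 4 3 (by decide), d0, d1, d2, d3, d4]
    ring
  · show (pSymb ![w 0 * w 1, w 0 * w 2, a2, w 3, w 4] (pScale (w 0) c)).mulVec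
        ![0, 1, w 0 * w 8, w 0 * w 9, w 0 * w 10] (1 : Fin 5)
      = w 0 * cmpF c a2 1 1 8 9 10 (fun w => (1 - w 0) * w 2) w
    simp only [pSymb, pScale, Matrix.mulVec, dotProduct, Fin.sum_univ_five, cmpF, Qf,
      Matrix.cons_val_zero, Matrix.cons_val_one, Matrix.head_cons, Matrix.cons_val_two,
      Matrix.tail_cons, Matrix.cons_val_three, Matrix.cons_val_four, Matrix.of_apply,
      Fin.isValue, Fin.reduceEq, reduceIte]
    simp only [hoff 0 1 (by decide), hoff 0 2 (by decide), hoff 0 3 (by decide),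
      hoff 0 4 (by decide), hoff 1 0 (by decide), hoff 1 2 (by decide), hoff 1 3 (by decide),
      hoff 1 4 (by decide), hoff 2 0 (by decide), hoff 2 1 (by decide), hoff 2 3 (by decide),
      hoff 2 4 (by decide), hoff 3 0 (by decide), hoff 3 1 (by decide), hoff 3 2 (by decide),
      hoff 3 4 (by decide), hoff 4 0 (by decide), hoff 4 1 (by decide), hoff 4 2 (by decide),
      hoff 4 3 (by decide), d0, d1, d2, d3, d4]
    ring
  · show (pSymb ![w 0 * w 1, w 0 * w 2, a2, w 3, w 4] (pScale (w 0) c)).mulVec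
        ![0, 1, w 0 * w 8, w 0 * w 9, w 0 * w 10] (2 : Fin 5)
      = w 0 * cmpF c a2 2 1 8 9 10 (fun w => (1 - w 0) * (a2 * w 8)) w
    simp only [pSymb, pScale, Matrix.mulVec, dotProduct, Fin.sum_univ_five, cmpF, Qf,
      Matrix.cons_val_zero, Matrix.cons_val_one, Matrix.head_cons, Matrix.cons_val_two,
      Matrix.tail_cons, Matrix.cons_val_three, Matrix.cons_val_four, Matrix.of_apply,
      Fin.isValue, Fin.reduceEq, reduceIte]
    simp only [hoff 0 1 (by decide), hoff 0 2 (by decide), hoff 0 3 (by decide),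
      hoff 0 4 (by decide), hoff 1 0 (by decide), hoff 1 2 (by decide), hoff 1 3 (by decide),
      hoff 1 4 (by decide), hoff 2 0 (by decide), hoff 2 1 (by decide), hoff 2 3 (by decide),
      hoff 2 4 (by decide), hoff 3 0 (by decide), hoff 3 1 (by decide), hoff 3 2 (by decide),
      hoff 3 4 (by decide), hoff 4 0 (by decide), hoff 4 1 (by decide), hoff 4 2 (by decide),
      hoff 4 3 (by decide), d0, d1, d2, d3, d4]
    ring
  · show (pSymb ![w 0 * w 1, w 0 * w 2, a2, w 3, w 4] (pScale (w 0) c)).mulVec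
        ![0, 1, w 0 * w 8, w 0 * w 9, w 0 * w 10] (3 : Fin 5)
      = w 0 * cmpF c a2 3 1 8 9 10 (fun w => (1 - w 0) * (w 3 * w 9)) w
    simp only [pSymb, pScale, Matrix.mulVec, dotProduct, Fin.sum_univ_five, cmpF, Qf,
      Matrix.cons_val_zero, Matrix.cons_val_one, Matrix.head_cons, Matrix.cons_val_two,
      Matrix.tail_cons, Matrix.cons_val_three, Matrix.cons_val_four, Matrix.of_apply,
      Fin.isValue, Fin.reduceEq, reduceIte]
    simp only [hoff 0 1 (by decide), hoff 0 2 (by decide), hoff 0 3 (by decide),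
      hoff 0 4 (by decide), hoff 1 0 (by decide), hoff 1 2 (by decide), hoff 1 3 (by decide),
      hoff 1 4 (by decide), hoff 2 0 (by decide), hoff 2 1 (by decide), hoff 2 3 (by decide),
      hoff 2 4 (by decide), hoff 3 0 (by decide), hoff 3 1 (by decide), hoff 3 2 (by decide),
      hoff 3 4 (by decide), hoff 4 0 (by decide), hoff 4 1 (by decide), hoff 4 2 (by decide),
      hoff 4 3 (by decide), d0, d1, d2, d3, d4]
    ring
  · show (pSymb ![w 0 * w 1, w 0 * w 2, a2, w 3, w 4] (pScale (w 0) c)).mulVec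
        ![0, 1, w 0 * w 8, w 0 * w 9, w 0 * w 10] (4 : Fin 5)
      = w 0 * cmpF c a2 4 1 8 9 10 (fun w => (1 - w 0) * (w 4 * w 10)) w
    simp only [pSymb, pScale, Matrix.mulVec, dotProduct, Fin.sum_univ_five, cmpF, Qf,
      Matrix.cons_val_zero, Matrix.cons_val_one, Matrix.head_cons, Matrix.cons_val_two,
      Matrix.tail_cons, Matrix.cons_val_three, Matrix.cons_val_four, Matrix.of_apply,
      Fin.isValue, Fin.reduceEq, reduceIte]
    simp only [hoff 0 1 (by decide), hoff 0 2 (by decide), hoff 0 3 (by decide),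
      hoff 0 4 (by decide), hoff 1 0 (by decide), hoff 1 2 (by decide), hoff 1 3 (by decide),
      hoff 1 4 (by decide), hoff 2 0 (by decide), hoff 2 1 (by decide), hoff 2 3 (by decide),
      hoff 2 4 (by decide), hoff 3 0 (by decide), hoff 3 1 (by decide), hoff 3 2 (by decide),
      hoff 3 4 (by decide), hoff 4 0 (by decide), hoff 4 1 (by decide), hoff 4 2 (by decide),
      hoff 4 3 (by decide), d0, d1, d2, d3, d4]
    ring

/-! ### Rank bound from two independent kernel vectors -/

theorem rank_le_three (M : Matrix (Fin 5) (Fin 5) ℝ) (x y : Fin 5 → ℝ)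
    (hx : M.mulVec x = 0) (hy : M.mulVec y = 0) (hli : LinearIndependent ℝ ![x, y]) :
    M.rank ≤ 3 := by
  have hxk : x ∈ LinearMap.ker M.mulVecLin := by
    simp [LinearMap.mem_ker, Matrix.mulVecLin_apply, hx]
  have hyk : y ∈ LinearMap.ker M.mulVecLin := by
    simp [LinearMap.mem_ker, Matrix.mulVecLin_apply, hy]
  have hspan : Submodule.span ℝ (Set.range ![x, y]) ≤ LinearMap.ker M.mulVecLin := by
    rw [Submodule.span_le]
    rintro z ⟨i, rfl⟩
    have h : ![x, y] i = x ∨ ![x, y] i = y := by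
      fin_cases i
      · exact Or.inl rfl
      · exact Or.inr rfl
    rcases h with h | h <;> rw [h]
    · exact hxk
    · exact hyk
  have hcard : Module.finrank ℝ (Submodule.span ℝ (Set.range ![x, y])) = 2 := by
    rw [finrank_span_eq_card hli]; simp
  have h2 : 2 ≤ Module.finrank ℝ (LinearMap.ker M.mulVecLin) := by
    rw [← hcard]; exact Submodule.finrank_mono hspan
  have hrn := LinearMap.finrank_range_add_finrank_ker M.mulVecLin
  rw [Module.finrank_pi ℝ] at hrn
  simp only [Fintype.card_fin] at hrn
  have hr : M.rank = Module.finrank ℝ (LinearMap.range M.mulVecLin) := rfl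
  omega

/-! ### the auxiliary path in parameter space -/

def zfun (t : ℝ) : Fin 11 → ℝ := fun i => if i = 0 then t else 0

theorem zfun_zero : zfun 0 = 0 := funext fun _ => ite_self _

theorem zfun_cont : Continuous zfun := by
  apply continuous_pi
  intro i
  by_cases hi : i = 0
  · simpa [zfun, hi] using continuous_id'
  · simpa [zfun, hi] using continuous_const

/-- The indices 1,…,5 of the paper correspond to `0,…,4 : Fin 5`, so the pair
`(i,j) = (1,2)` is `(0,1)`. -/
theorem stmt11 (c : Fin 5 → Fin 5 → Fin 5 → ℝ) (hc : IsParamColl 5 c)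
    (hC1 : ∀ k l : Fin 5, k ≠ l → k ≠ 0 → k ≠ 1 → l ≠ 0 → l ≠ 1 →
      c 0 k 1 * c 1 l 0 ≠ c 1 k 0 * c 0 l 1)
    (hC2 : ∀ p : Fin 5, p ≠ 0 → p ≠ 1 →
      ∀ k l m : Fin 5, k ≠ l → k ≠ m → l ≠ m →
        k ≠ 0 → k ≠ 1 → k ≠ p → l ≠ 0 → l ≠ 1 → l ≠ p → m ≠ 0 → m ≠ 1 → m ≠ p →
        ∀ I : Fin 5, (I = 0 ∨ I = 1) →
          c p k I * (c 0 l 1 * c 1 m 0 - c 1 l 0 * c 0 m 1)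
            + c p l I * (c 1 k 0 * c 0 m 1 - c 0 k 1 * c 1 m 0)
            + c p m I * (c 0 k 1 * c 1 l 0 - c 1 k 0 * c 0 l 1) ≠ 0)
    (a : Fin 5 → ℝ)
    (ha_unit : ∑ k, (a k) ^ 2 = 1)
    (ha0 : a 0 = 0) (ha1 : a 1 = 0)
    (ha : a 2 * a 3 * a 4 ≠ 0)
    (heq1 : c 0 2 1 * a 2 + c 0 3 1 * a 3 + c 0 4 1 * a 4 = 0)
    (heq2 : c 1 2 0 * a 2 + c 1 3 0 * a 3 + c 1 4 0 * a 4 = 0) :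
    ∃ T > (0 : ℝ), ∃ ξ : ℝ → (Fin 5 → ℝ),
      ContinuousOn ξ (Set.Ioo 0 T) ∧
      Filter.Tendsto ξ (nhdsWithin 0 (Set.Ioi 0)) (nhds a) ∧
      ∀ t ∈ Set.Ioo (0 : ℝ) T, ξ t ≠ 0 ∧ (pSymb (ξ t) (pScale t c)).rank ≤ 3 := by
  -- basic nonvanishing
  have ha2 : a 2 ≠ 0 := fun h => ha (by rw [h]; ring)
  have ha3 : a 3 ≠ 0 := fun h => ha (by rw [h]; ring)
  have ha4 : a 4 ≠ 0 := fun h => ha (by rw [h]; ring)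
  have hC1' : c 0 3 1 * c 1 4 0 ≠ c 1 3 0 * c 0 4 1 :=
    hC1 3 4 (by decide) (by decide) (by decide) (by decide) (by decide)
  set W : Fin 11 → ℝ := Wpt c (a 2) (a 3) (a 4) with hWdef
  have hW0 : W 0 = 0 := rfl
  have hFfW : Ff c (a 2) W = 0 := Ff_base c (a 2) (a 3) (a 4) ha2 ha3 ha4 heq1 heq2
  -- the derivative and its invertibility
  obtain ⟨L, hL, hLv⟩ := exists_deriv c (a 2) W hW0
  have hker : ∀ v, L v = 0 → v = 0 := fun v hv =>
    Jv_inj c (a 2) (a 3) (a 4) ha2 ha3 ha4 hC1' W rfl rfl v ((hLv v) ▸ hv)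
  have hinj : Function.Injective (L : (Fin 11 → ℝ) →ₗ[ℝ] (Fin 11 → ℝ)) := by
    intro u v huv
    have h0 : L (u - v) = 0 := by
      have huv' : L u = L v := huv
      rw [map_sub, huv', sub_self]
    exact sub_eq_zero.mp (hker _ h0)
  have hsurj : Function.Surjective (L : (Fin 11 → ℝ) →ₗ[ℝ] (Fin 11 → ℝ)) :=
    LinearMap.injective_iff_surjective.mp hinj
  let e₀ : (Fin 11 → ℝ) ≃ₗ[ℝ] (Fin 11 → ℝ) :=
    LinearEquiv.ofBijective (L : (Fin 11 → ℝ) →ₗ[ℝ] (Fin 11 → ℝ)) ⟨hinj, hsurj⟩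
  let e : (Fin 11 → ℝ) ≃L[ℝ] (Fin 11 → ℝ) := e₀.toContinuousLinearEquiv
  have hcoe : (e : (Fin 11 → ℝ) →L[ℝ] (Fin 11 → ℝ)) = L := by
    apply ContinuousLinearMap.ext
    intro v
    rfl
  have hF' : HasStrictFDerivAt (Ff c (a 2))
      (e : (Fin 11 → ℝ) →L[ℝ] (Fin 11 → ℝ)) W := by rw [hcoe]; exact hL
  -- inverse function theorem
  set φ := hF'.toOpenPartialHomeomorph (Ff c (a 2)) with hφdef
  have hsrc : W ∈ φ.source := hF'.mem_toOpenPartialHomeomorph_source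
  have hφW : φ W = 0 := hFfW
  have htgt : (0 : Fin 11 → ℝ) ∈ φ.target := by
    have h := φ.map_source hsrc
    rwa [hφW] at h
  have hnhds : zfun ⁻¹' φ.target ∈ nhds (0 : ℝ) := by
    have h1 : φ.target ∈ nhds (zfun 0) := by
      rw [zfun_zero]; exact φ.open_target.mem_nhds htgt
    exact zfun_cont.continuousAt.preimage_mem_nhds h1
  obtain ⟨T, hT, hball⟩ := Metric.mem_nhds_iff.mp hnhds
  have hmem : ∀ t : ℝ, |t| < T → zfun t ∈ φ.target := by
    intro t ht
    apply hball
    simpa [Real.dist_eq] using ht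
  -- the curve
  have hwca : ∀ t : ℝ, |t| < T → ContinuousAt (fun s => φ.symm (zfun s)) t := by
    intro t ht
    have h1 : ContinuousAt (φ.symm) (zfun t) := by
      apply (φ.symm).continuousAt
      rw [OpenPartialHomeomorph.symm_source]
      exact hmem t ht
    exact h1.comp zfun_cont.continuousAt
  have hcomp : ∀ (i : Fin 11), ∀ t : ℝ, |t| < T →
      ContinuousAt (fun s => φ.symm (zfun s) i) t := by
    intro i t ht
    exact (continuous_apply i).continuousAt.comp (hwca t ht)
  have hξca : ∀ t : ℝ, |t| < T → ContinuousAt (fun s =>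
      (![φ.symm (zfun s) 0 * φ.symm (zfun s) 1, φ.symm (zfun s) 0 * φ.symm (zfun s) 2,
        a 2, φ.symm (zfun s) 3, φ.symm (zfun s) 4] : Fin 5 → ℝ)) t := by
    intro t ht
    apply continuousAt_pi.2
    intro i
    fin_cases i
    · exact ((hcomp 0 t ht).mul (hcomp 1 t ht))
    · exact ((hcomp 0 t ht).mul (hcomp 2 t ht))
    · exact continuousAt_const
    · exact hcomp 3 t ht
    · exact hcomp 4 t ht
  refine ⟨T, hT, fun t =>
    ![φ.symm (zfun t) 0 * φ.symm (zfun t) 1, φ.symm (zfun t) 0 * φ.symm (zfun t) 2,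
      a 2, φ.symm (zfun t) 3, φ.symm (zfun t) 4], ?_, ?_, ?_⟩
  · -- continuity on (0, T)
    intro t ht
    exact (hξca t (by rw [abs_lt]; exact ⟨by linarith [ht.1], ht.2⟩)).continuousWithinAt
  · -- the limit as t → 0⁺
    have h0T : |(0:ℝ)| < T := by simpa using hT
    have hW00 : φ.symm (zfun 0) = W := by
      rw [zfun_zero]
      have h := φ.left_inv hsrc
      rwa [hφW] at h
    have hval : (![φ.symm (zfun 0) 0 * φ.symm (zfun 0) 1, φ.symm (zfun 0) 0 * φ.symm (zfun 0) 2,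
          a 2, φ.symm (zfun 0) 3, φ.symm (zfun 0) 4] : Fin 5 → ℝ) = a := by
      rw [hW00]
      funext i
      fin_cases i
      · show W 0 * W 1 = a 0
        rw [hW0, zero_mul, ha0]
      · show W 0 * W 2 = a 1
        rw [hW0, zero_mul, ha1]
      · rfl
      · show W 3 = a 3
        rw [hWdef]
        exact Wpt_3 c (a 2) (a 3) (a 4)
      · show W 4 = a 4
        rw [hWdef]
        exact Wpt_4 c (a 2) (a 3) (a 4)
    have h2 : Filter.Tendsto (fun s =>
        (![φ.symm (zfun s) 0 * φ.symm (zfun s) 1, φ.symm (zfun s) 0 * φ.symm (zfun s) 2,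
          a 2, φ.symm (zfun s) 3, φ.symm (zfun s) 4] : Fin 5 → ℝ)) (nhds 0)
        (nhds (![φ.symm (zfun 0) 0 * φ.symm (zfun 0) 1, φ.symm (zfun 0) 0 * φ.symm (zfun 0) 2,
          a 2, φ.symm (zfun 0) 3, φ.symm (zfun 0) 4] : Fin 5 → ℝ)) := (hξca 0 h0T).tendsto
    rw [hval] at h2
    exact h2.mono_left nhdsWithin_le_nhds
  · -- the singular-rank property
    intro t ht
    have htT : |t| < T := abs_lt.mpr ⟨by linarith [ht.1], ht.2⟩
    have hzt := hmem t htT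
    have hRV : Ff c (a 2) (φ.symm (zfun t)) = zfun t := φ.right_inv hzt
    set v : Fin 11 → ℝ := φ.symm (zfun t) with hvdef
    have hv0 : v 0 = t := congrFun hRV 0
    constructor
    · intro hz
      have h2 : a 2 = 0 := congrFun hz 2
      exact ha2 h2
    · have hcmp1 : Ff c (a 2) v 1 = 0 := congrFun hRV 1
      have hcmp2 : Ff c (a 2) v 2 = 0 := congrFun hRV 2
      have hcmp3 : Ff c (a 2) v 3 = 0 := congrFun hRV 3
      have hcmp4 : Ff c (a 2) v 4 = 0 := congrFun hRV 4
      have hcmp5 : Ff c (a 2) v 5 = 0 := congrFun hRV 5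
      have hcmp6 : Ff c (a 2) v 6 = 0 := congrFun hRV 6
      have hcmp7 : Ff c (a 2) v 7 = 0 := congrFun hRV 7
      have hcmp8 : Ff c (a 2) v 8 = 0 := congrFun hRV 8
      have hcmp9 : Ff c (a 2) v 9 = 0 := congrFun hRV 9
      have hcmp10 : Ff c (a 2) v 10 = 0 := congrFun hRV 10
      have hx0 : (pSymb ![v 0 * v 1, v 0 * v 2, a 2, v 3, v 4] (pScale (v 0) c)).mulVec
          ![1, 0, v 0 * v 5, v 0 * v 6, v 0 * v 7] = 0 := by
        rw [keyx c hc (a 2) v]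
        funext i
        fin_cases i
        · show v 0 * Ff c (a 2) v 1 = 0
          rw [hcmp1, mul_zero]
        · show v 0 * Ff c (a 2) v 2 = 0
          rw [hcmp2, mul_zero]
        · show v 0 * Ff c (a 2) v 5 = 0
          rw [hcmp5, mul_zero]
        · show v 0 * Ff c (a 2) v 6 = 0
          rw [hcmp6, mul_zero]
        · show v 0 * Ff c (a 2) v 7 = 0
          rw [hcmp7, mul_zero]
      have hy0 : (pSymb ![v 0 * v 1, v 0 * v 2, a 2, v 3, v 4] (pScale (v 0) c)).mulVec
          ![0, 1, v 0 * v 8, v 0 * v 9, v 0 * v 10] = 0 := by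
        rw [keyy c hc (a 2) v]
        funext i
        fin_cases i
        · show v 0 * Ff c (a 2) v 3 = 0
          rw [hcmp3, mul_zero]
        · show v 0 * Ff c (a 2) v 4 = 0
          rw [hcmp4, mul_zero]
        · show v 0 * Ff c (a 2) v 8 = 0
          rw [hcmp8, mul_zero]
        · show v 0 * Ff c (a 2) v 9 = 0
          rw [hcmp9, mul_zero]
        · show v 0 * Ff c (a 2) v 10 = 0
          rw [hcmp10, mul_zero]
      have hli : LinearIndependent ℝ
          ![(![1, 0, v 0 * v 5, v 0 * v 6, v 0 * v 7] : Fin 5 → ℝ),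
            (![0, 1, v 0 * v 8, v 0 * v 9, v 0 * v 10] : Fin 5 → ℝ)] := by
        rw [linearIndependent_fin2]
        constructor
        · intro h
          have h1 : (1 : ℝ) = 0 := congrFun h 1
          norm_num at h1
        · intro r h
          have h0 : r * 0 = 1 := congrFun h 0
          norm_num at h0
      have hkey := rank_le_three _ _ _ hx0 hy0 hli
      show (pSymb ![v 0 * v 1, v 0 * v 2, a 2, v 3, v 4] (pScale t c)).rank ≤ 3
      rw [← hv0]
      exact hkey
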